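/- Let f be a strongly hyperbolic function, a > 0, b > 0, c > 0. Then the function ǧ(x) = a·f(x+b) + c − f(x) on (0,∞) has exactly one root, at which it changes sign. -/

import Mathlib

open Filter Set Real

/-- A strongly hyperbolic function `f : (0,∞) → (0,∞)`. -/
def StronglyHyperbolic (f : ℝ → ℝ) : Prop :=
  (∀ x ∈ Set.Ioi (0:ℝ), 0 < f x) ∧
  Filter.Tendsto f (nhdsWithin 0 (Set.Ioi 0)) Filter.atTop ∧
  Filter.Tendsto f Filter.atTop (nhds 0) ∧
  StrictConvexOn ℝ (Set.Ioi 0) f ∧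
  (∀ b : ℝ, Filter.Tendsto (fun x => f (x + b) / f x) Filter.atTop (nhds 1)) ∧
  (∀ x ∈ Set.Ioi (0:ℝ), DifferentiableAt ℝ f x) ∧
  StrictConvexOn ℝ (Set.Ioi 0) (fun x => Real.log |deriv f x|)

/-- For a strictly convex function `u` on `(0,∞)`, the shifted difference
`x ↦ u x - u (x + b)` is strictly decreasing. -/
lemma shift_diff_strictAnti {u : ℝ → ℝ} (hu : StrictConvexOn ℝ (Set.Ioi 0) u)
    {b x y : ℝ} (hb : 0 < b) (hx : 0 < x) (hxy : x < y) :
    u y - u (y + b) < u x - u (x + b) := by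
  have hd : 0 < y + b - x := by linarith
  set l : ℝ := b / (y + b - x) with hl_def
  set m : ℝ := (y - x) / (y + b - x) with hm_def
  have hl : 0 < l := div_pos hb hd
  have hm : 0 < m := div_pos (by linarith) hd
  have hs : l + m = 1 := by
    rw [hl_def, hm_def, ← add_div, div_eq_one_iff_eq (ne_of_gt hd)]
    ring
  have hyb : y + b ∈ Set.Ioi (0:ℝ) := by simp; linarith
  have hxm : x ∈ Set.Ioi (0:ℝ) := hx
  have hne : x ≠ y + b := by intro h; linarith
  have h1 := hu.2 hxm hyb hne hm hl (by linarith)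
  have h2 := hu.2 hxm hyb hne hl hm hs
  have e1 : l • x + m • (y + b) = y := by
    rw [smul_eq_mul, smul_eq_mul, hl_def, hm_def]
    field_simp
    ring
  have e2 : m • x + l • (y + b) = x + b := by
    rw [smul_eq_mul, smul_eq_mul, hl_def, hm_def]
    field_simp
    ring
  rw [e2, smul_eq_mul, smul_eq_mul] at h1
  rw [e1, smul_eq_mul, smul_eq_mul] at h2
  have hsum := add_lt_add h1 h2
  have hkey : m * u x + l * u (y + b) + (l * u x + m * u (y + b)) = u x + u (y + b) := by
    have hm1 : m = 1 - l := by linarith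
    rw [hm1]; ring
  linarith

theorem stmt9 (f : ℝ → ℝ) (hf : StronglyHyperbolic f) (a b c : ℝ) (ha : 0 < a) (hb : 0 < b)
    (hc : 0 < c) :
    ∃ x₀ > (0:ℝ), a * f (x₀ + b) + c - f x₀ = 0 ∧
      (∀ x, 0 < x → x < x₀ → a * f (x + b) + c - f x < 0) ∧
      (∀ x, x₀ < x → 0 < a * f (x + b) + c - f x) := by
  obtain ⟨hpos, h0, htop, hconv, _hratio, hdiff, hlconv⟩ := hf
  set u : ℝ → ℝ := fun x => Real.log |deriv f x| with hu_def
  set g : ℝ → ℝ := fun x => a * f (x + b) + c - f x with hg_def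
  -- derivative of g
  have hgd : ∀ t ∈ Set.Ioi (0:ℝ), HasDerivAt g (a * deriv f (t + b) - deriv f t) t := by
    intro t ht
    have htb : t + b ∈ Set.Ioi (0:ℝ) := by simp only [Set.mem_Ioi] at ht ⊢; linarith
    have h1 : HasDerivAt (fun x => f (x + b)) (deriv f (t + b)) t := by
      have := ((hdiff (t + b) htb).hasDerivAt).comp t ((hasDerivAt_id t).add_const b)
      simp only [mul_one] at this
      exact this
    exact ((h1.const_mul a).add_const c).sub (hdiff t ht).hasDerivAt
  have hcont : ContinuousOn g (Set.Ioi 0) := fun t ht =>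
    (hgd t ht).continuousAt.continuousWithinAt
  -- deriv f < 0 on (0,∞)
  have hd_neg : ∀ t ∈ Set.Ioi (0:ℝ), deriv f t < 0 := by
    intro t ht
    by_contra hcon
    push_neg at hcon
    have hle : ∀ y, t ≤ y → f t ≤ f y := by
      intro y hy
      rcases eq_or_lt_of_le hy with rfl | hy'
      · exact le_refl _
      · have hymem : y ∈ Set.Ioi (0:ℝ) := lt_trans ht hy'
        have hslope := hconv.deriv_lt_slope ht hymem hy' (hdiff t ht)
        rw [slope_def_field] at hslope
        have h2 : 0 < (f y - f t) / (y - t) := lt_of_le_of_lt hcon hslope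
        have h3 := mul_pos h2 (sub_pos.2 hy')
        rw [div_mul_cancel₀ _ (ne_of_gt (sub_pos.2 hy'))] at h3
        linarith
    have : f t ≤ 0 := ge_of_tendsto htop (eventually_atTop.2 ⟨t, hle⟩)
    linarith [hpos t ht]
  -- deriv f t = - exp (u t)
  have hexp : ∀ t ∈ Set.Ioi (0:ℝ), deriv f t = -Real.exp (u t) := by
    intro t ht
    have h := hd_neg t ht
    have : u t = Real.log (-deriv f t) := by rw [hu_def]; simp [abs_of_neg h]
    rw [this, Real.exp_log (by linarith)]
    ring
  -- sign conditions on deriv g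
  have hgpos : ∀ t ∈ Set.Ioi (0:ℝ), Real.log a < u t - u (t + b) →
      0 < a * deriv f (t + b) - deriv f t := by
    intro t ht h
    have htb : t + b ∈ Set.Ioi (0:ℝ) := by simp only [Set.mem_Ioi] at ht ⊢; linarith
    rw [hexp t ht, hexp (t + b) htb]
    have h1 : Real.log a + u (t + b) < u t := by linarith
    have h2 : a * Real.exp (u (t + b)) < Real.exp (u t) := by
      have := Real.exp_lt_exp.2 h1
      rwa [Real.exp_add, Real.exp_log ha] at this
    linarith
  have hgneg : ∀ t ∈ Set.Ioi (0:ℝ), u t - u (t + b) < Real.log a →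
      a * deriv f (t + b) - deriv f t < 0 := by
    intro t ht h
    have htb : t + b ∈ Set.Ioi (0:ℝ) := by simp only [Set.mem_Ioi] at ht ⊢; linarith
    rw [hexp t ht, hexp (t + b) htb]
    have h1 : u t < Real.log a + u (t + b) := by linarith
    have h2 : Real.exp (u t) < a * Real.exp (u (t + b)) := by
      have := Real.exp_lt_exp.2 h1
      rwa [Real.exp_add, Real.exp_log ha] at this
    linarith
  -- strict antitonicity of shifted log-derivative difference
  have hw : ∀ x y : ℝ, 0 < x → x < y → u y - u (y + b) < u x - u (x + b) :=
    fun x y hx hxy => shift_diff_strictAnti hlconv hb hx hxy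
  -- g tends to -∞ at 0+
  have hbot : Tendsto g (nhdsWithin 0 (Set.Ioi 0)) atBot := by
    have hadd : Tendsto (fun x : ℝ => x + b) (nhdsWithin 0 (Set.Ioi 0)) (nhds b) := by
      have h1 : Tendsto (fun x : ℝ => x + b) (nhds 0) (nhds (0 + b)) :=
        (continuous_id.add continuous_const).tendsto 0
      rw [zero_add] at h1
      exact h1.mono_left nhdsWithin_le_nhds
    have hfb : Tendsto (fun x : ℝ => a * f (x + b) + c) (nhdsWithin 0 (Set.Ioi 0))
        (nhds (a * f b + c)) :=
      (((hdiff b hb).continuousAt.tendsto.comp hadd).const_mul a).add_const c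
    have hneg : Tendsto (fun x : ℝ => -f x) (nhdsWithin 0 (Set.Ioi 0)) atBot :=
      tendsto_neg_atTop_atBot.comp h0
    have := hfb.add_atBot hneg
    refine this.congr fun x => ?_
    rw [hg_def]
    ring
  -- g tends to c at +∞
  have hc_top : Tendsto g atTop (nhds c) := by
    have h2 : Tendsto (fun x : ℝ => f (x + b)) atTop (nhds 0) :=
      htop.comp (tendsto_atTop_add_const_right _ b tendsto_id)
    have h3 : Tendsto g atTop (nhds (a * 0 + c - 0)) :=
      ((h2.const_mul a).add_const c).sub htop
    simpa using h3
  -- a point where g is negative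
  obtain ⟨ε, hεneg, hεpos⟩ :=
    ((hbot.eventually (eventually_lt_atBot 0)).and eventually_mem_nhdsWithin).exists
  rw [Set.mem_Ioi] at hεpos
  -- case split on whether the decreasing region is nonempty
  set W : Set ℝ := {t : ℝ | 0 < t ∧ u t - u (t + b) ≤ Real.log a} with hW_def
  rcases W.eq_empty_or_nonempty with hWe | ⟨s, hsW⟩
  · -- W empty : g strictly increasing on (0,∞)
    have hmono : StrictMonoOn g (Set.Ioi 0) := by
      refine strictMonoOn_of_deriv_pos (convex_Ioi 0) hcont ?_
      rw [interior_Ioi]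
      intro t ht
      rw [(hgd t ht).deriv]
      refine hgpos t ht ?_
      by_contra hle
      push_neg at hle
      have : t ∈ W := ⟨ht, hle⟩
      rw [hWe] at this
      exact this
    obtain ⟨q, hq0, hqε⟩ :=
      ((hc_top.eventually_const_lt hc).and (eventually_gt_atTop ε)).exists
    have hsub : Set.Icc ε q ⊆ Set.Ioi 0 := fun t htm => lt_of_lt_of_le hεpos htm.1
    have hzero : (0:ℝ) ∈ Set.Ioo (g ε) (g q) := ⟨hεneg, hq0⟩
    obtain ⟨x₀, hx₀m, hgx₀⟩ := intermediate_value_Ioo hqε.le (hcont.mono hsub) hzero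
    have hx₀pos : 0 < x₀ := lt_trans hεpos hx₀m.1
    refine ⟨x₀, hx₀pos, hgx₀, ?_, ?_⟩
    · intro x hx0 hxx₀
      have := hmono (Set.mem_Ioi.2 hx0) (Set.mem_Ioi.2 hx₀pos) hxx₀
      show g x < 0
      rw [← hgx₀] at *
      exact this
    · intro x hx
      have := hmono (Set.mem_Ioi.2 hx₀pos) (Set.mem_Ioi.2 (lt_trans hx₀pos hx)) hx
      show 0 < g x
      rw [← hgx₀]
      exact this
  · -- W nonempty : g increases on (0, s₀) then decreases above s₀
    have hbdd : BddBelow W := ⟨0, fun t htW => htW.1.le⟩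
    set s₀ := sInf W with hs₀_def
    have hs₀0 : 0 ≤ s₀ := le_csInf ⟨s, hsW⟩ fun t ht => ht.1.le
    have hderiv_neg : ∀ t, s₀ < t → deriv g t < 0 := by
      intro t ht'
      have ht0 : 0 < t := lt_of_le_of_lt hs₀0 ht'
      obtain ⟨s', hs'W, hs't⟩ := exists_lt_of_csInf_lt ⟨s, hsW⟩ ht'
      have hlt : u t - u (t + b) < u s' - u (s' + b) := hw s' t hs'W.1 hs't
      rw [(hgd t ht0).deriv]
      exact hgneg t ht0 (lt_of_lt_of_le hlt hs'W.2)
    have hanti : StrictAntiOn g (Set.Ioi s₀) := by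
      refine strictAntiOn_of_deriv_neg (convex_Ioi s₀)
        (hcont.mono fun t ht => lt_of_le_of_lt hs₀0 ht) ?_
      rw [interior_Ioi]
      exact fun t ht => hderiv_neg t ht
    have hge_c : ∀ t, s₀ < t → c ≤ g t := by
      intro t ht
      refine le_of_tendsto hc_top ?_
      filter_upwards [eventually_ge_atTop (t + 1)] with s' hs'
      have hts' : t < s' := by linarith
      exact (hanti ht (lt_trans ht hts') hts').le
    have hεs₀ : ε ≤ s₀ := by
      by_contra hcon
      push_neg at hcon
      linarith [hge_c ε hcon]
    have hs₀pos : 0 < s₀ := lt_of_lt_of_le hεpos hεs₀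
    have hgs₀ : c ≤ g s₀ := by
      have hcont₀ : Tendsto g (nhdsWithin s₀ (Set.Ioi s₀)) (nhds (g s₀)) :=
        (hgd s₀ hs₀pos).continuousAt.continuousWithinAt
      refine ge_of_tendsto hcont₀ ?_
      filter_upwards [self_mem_nhdsWithin] with t ht using hge_c t ht
    have hmono : StrictMonoOn g (Set.Ioo 0 s₀) := by
      refine strictMonoOn_of_deriv_pos (convex_Ioo 0 s₀) (hcont.mono fun t ht => ht.1) ?_
      rw [interior_Ioo]
      intro t ht
      rw [(hgd t ht.1).deriv]
      refine hgpos t ht.1 ?_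
      by_contra hle
      push_neg at hle
      exact absurd (csInf_le hbdd ⟨ht.1, hle⟩) (not_le.2 ht.2)
    have hεlt : ε < s₀ := by
      rcases lt_or_eq_of_le hεs₀ with h | h
      · exact h
      · exfalso; rw [h] at hεneg; linarith
    have hzero : (0:ℝ) ∈ Set.Ioo (g ε) (g s₀) := ⟨hεneg, by linarith⟩
    have hsub : Set.Icc ε s₀ ⊆ Set.Ioi 0 := fun t htm => lt_of_lt_of_le hεpos htm.1
    obtain ⟨x₀, hx₀m, hgx₀⟩ := intermediate_value_Ioo hεlt.le (hcont.mono hsub) hzero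
    have hx₀pos : 0 < x₀ := lt_trans hεpos hx₀m.1
    refine ⟨x₀, hx₀pos, hgx₀, ?_, ?_⟩
    · intro x hx0 hxx₀
      have := hmono (Set.mem_Ioo.2 ⟨hx0, lt_trans hxx₀ hx₀m.2⟩)
        (Set.mem_Ioo.2 ⟨hx₀pos, hx₀m.2⟩) hxx₀
      show g x < 0
      rw [← hgx₀]
      exact this
    · intro x hx
      show 0 < g x
      rcases lt_trichotomy x s₀ with h | h | h
      · have := hmono (Set.mem_Ioo.2 ⟨hx₀pos, hx₀m.2⟩)
          (Set.mem_Ioo.2 ⟨lt_trans hx₀pos hx, h⟩) hx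
        rw [← hgx₀]
        exact this
      · rw [h]; linarith
      · linarith [hge_c x h]
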